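/- Let X₁, …, Xₙ and Y₁, …, Y_m be independent Bernoulli random variables with E[Xᵢ] = pᵢ and E[Y_j] = q_j, and suppose Σ_{i=1}^n pᵢ = Σ_{j=1}^m q_j = μ > 0. Then d_TV( Σ_{i=1}^n Xᵢ, Σ_{j=1}^m Y_j ) ≤ ( Σ_{i=1}^n pᵢ² + Σ_{j=1}^m q_j² ) / μ. -/

import Mathlib

open MeasureTheory ProbabilityTheory
namespace SteinChenPBD
open Real Finset
open scoped Classical

noncomputable def ppi (lam : ℝ) (k : ℕ) : ℝ := Real.exp (-lam) * lam ^ k / k.factorial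

variable {lam : ℝ}

lemma ppi_nonneg (h : 0 < lam) (k : ℕ) : 0 ≤ ppi lam k := by unfold ppi; positivity

lemma hasSum_ppi (h : 0 < lam) : HasSum (ppi lam) 1 := by
  unfold ppi
  apply (hasSum_mul_left_iff (Real.exp_ne_zero lam)).mp
  simp only [mul_one]
  have : (fun i ↦ rexp lam * (rexp (-lam) * lam ^ i / ↑(Nat.factorial i))) =
      fun i ↦ lam ^ i / ↑(Nat.factorial i) := by
    ext n
    rw [mul_div_assoc, Real.exp_neg, ← mul_assoc, ← div_eq_mul_inv,
      div_self (Real.exp_ne_zero lam), one_mul]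
  rw [this, Real.exp_eq_exp_ℝ]
  exact NormedSpace.expSeries_div_hasSum_exp lam

lemma summable_ppi (h : 0 < lam) : Summable (ppi lam) := (hasSum_ppi h).summable

lemma ppi_succ (h : 0 < lam) (k : ℕ) :
    ((k : ℝ) + 1) * ppi lam (k + 1) = lam * ppi lam k := by
  have hk : ((k.factorial : ℝ)) ≠ 0 := Nat.cast_ne_zero.mpr k.factorial_ne_zero
  have hk1 : ((k : ℝ) + 1) ≠ 0 := by positivity
  unfold ppi
  rw [Nat.factorial_succ, pow_succ]
  push_cast
  field_simp

/-- Poisson CDF at `k`. -/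
noncomputable def FF (lam : ℝ) (k : ℕ) : ℝ := ∑ i ∈ Finset.range (k+1), ppi lam i

/-- Poisson probability of a set `B ⊆ ℕ`. -/
noncomputable def rho (lam : ℝ) (B : Set ℕ) : ℝ := ∑' j, B.indicator (ppi lam) j

noncomputable def SS (lam : ℝ) (B : Set ℕ) (k : ℕ) : ℝ :=
  ∑ i ∈ Finset.range (k+1), B.indicator (ppi lam) i

noncomputable def uu (lam : ℝ) (k : ℕ) : ℝ := Real.exp lam * k.factorial / lam ^ (k+1)

/-- Stein solution for the set `B`. -/
noncomputable def ff (lam : ℝ) (B : Set ℕ) : ℕ → ℝ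
  | 0 => 0
  | (k+1) => uu lam k * (SS lam B k - rho lam B * FF lam k)

lemma uu_nonneg (h : 0 < lam) (k : ℕ) : 0 ≤ uu lam k := by unfold uu; positivity

lemma uu_succ (h : 0 < lam) (k : ℕ) :
    uu lam (k+1) = uu lam k * ((k : ℝ) + 1) / lam := by
  unfold uu
  rw [Nat.factorial_succ, pow_succ]
  push_cast
  have : lam ^ (k+1) ≠ 0 := by positivity
  field_simp

lemma uu_mul_ppi_succ (h : 0 < lam) (k : ℕ) :
    uu lam k * ppi lam (k + 1) = 1 / ((k : ℝ) + 1) := by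
  unfold uu ppi
  rw [Nat.factorial_succ, Real.exp_neg]
  have h1 : ((k.factorial : ℝ)) ≠ 0 := Nat.cast_ne_zero.mpr k.factorial_ne_zero
  have h2 : lam ^ (k+1) ≠ 0 := by positivity
  have h3 : Real.exp lam ≠ 0 := Real.exp_ne_zero lam
  have h4 : ((k : ℝ) + 1) ≠ 0 := by positivity
  push_cast
  field_simp

lemma uu_succ_mul_ppi_succ (h : 0 < lam) (k : ℕ) :
    uu lam (k+1) * ppi lam (k + 1) = 1 / lam := by
  unfold uu ppi
  rw [Nat.factorial_succ, Real.exp_neg]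
  have h1 : ((k.factorial : ℝ)) ≠ 0 := Nat.cast_ne_zero.mpr k.factorial_ne_zero
  have h2 : lam ^ (k+2) ≠ 0 := by positivity
  have h3 : Real.exp lam ≠ 0 := Real.exp_ne_zero lam
  have h4 : ((k : ℝ) + 1) ≠ 0 := by positivity
  push_cast
  field_simp
  ring

lemma exp_mul_ppi_zero : Real.exp lam * ppi lam 0 = 1 := by
  unfold ppi
  simp [Real.exp_neg, ← Real.exp_add]

lemma hasSum_indicator (h : 0 < lam) (B : Set ℕ) :
    HasSum (B.indicator (ppi lam)) (rho lam B) :=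
  ((summable_ppi h).indicator B).hasSum

lemma rho_univ (h : 0 < lam) : rho lam Set.univ = 1 := by
  have := (hasSum_ppi h)
  have h2 : HasSum (Set.univ.indicator (ppi lam)) 1 := by simpa using this
  exact h2.tsum_eq

lemma rho_nonneg (h : 0 < lam) (B : Set ℕ) : 0 ≤ rho lam B :=
  tsum_nonneg fun j => Set.indicator_nonneg (fun i _ => ppi_nonneg h i) j

lemma hasSum_tail (h : 0 < lam) (k : ℕ) :
    HasSum (fun i => ppi lam (i + (k+1))) (1 - FF lam k) := by
  exact (hasSum_nat_add_iff' (k+1)).mpr (hasSum_ppi h)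

lemma FF_le_one (h : 0 < lam) (k : ℕ) : FF lam k ≤ 1 := by
  have := (hasSum_tail h k).nonneg (fun i => ppi_nonneg h _)
  linarith

lemma FF_nonneg (h : 0 < lam) (k : ℕ) : 0 ≤ FF lam k :=
  Finset.sum_nonneg fun i _ => ppi_nonneg h i


lemma ff_univ (h : 0 < lam) (k : ℕ) : ff lam Set.univ k = 0 := by
  cases k with
  | zero => rfl
  | succ k =>
    have hS : SS lam Set.univ k = FF lam k := by
      unfold SS FF; simp
    simp [ff, hS, rho_univ h]

lemma stein_eq (h : 0 < lam) (B : Set ℕ) (k : ℕ) :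
    lam * ff lam B (k+1) - k * ff lam B k = (if k ∈ B then 1 else 0) - rho lam B := by
  cases k with
  | zero =>
    simp only [ff, Nat.cast_zero, zero_mul, sub_zero]
    have hS : SS lam B 0 = (if 0 ∈ B then 1 else 0) * ppi lam 0 := by
      by_cases h0 : 0 ∈ B <;>
        simp [SS, Set.indicator_apply, h0]
    have hF : FF lam 0 = ppi lam 0 := by simp [FF]
    rw [hS, hF]
    have e : ∀ t : ℝ, lam * (uu lam 0 * (t * ppi lam 0 - rho lam B * ppi lam 0))
        = (Real.exp lam * ppi lam 0) * (t - rho lam B) := by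
      intro t
      unfold uu
      have hl : lam ≠ 0 := ne_of_gt h
      field_simp [Nat.factorial]
      ring
    rw [e, exp_mul_ppi_zero, one_mul]
  | succ k =>
    have h1 : SS lam B (k+1) = SS lam B k + (if k+1 ∈ B then 1 else 0) * ppi lam (k+1) := by
      simp only [SS, Finset.sum_range_succ, Set.indicator_apply]
      split_ifs <;> ring
    have h2 : FF lam (k+1) = FF lam k + ppi lam (k+1) := by
      simp [FF, Finset.sum_range_succ]
    have hlu : lam * uu lam (k+1) = ((k : ℝ)+1) * uu lam k := by
      rw [uu_succ h]
      field_simp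
    have key : uu lam k * ppi lam (k+1) * ((k:ℝ)+1) = 1 := by
      have := uu_mul_ppi_succ h k
      have hk1 : ((k:ℝ)+1) ≠ 0 := by positivity
      field_simp at this
      linarith [this]
    simp only [ff]
    rw [h1, h2]
    push_cast
    linear_combination (SS lam B k + (if k+1 ∈ B then (1:ℝ) else 0) * ppi lam (k+1)
      - rho lam B * (FF lam k + ppi lam (k+1))) * hlu
      + (((if k+1 ∈ B then (1:ℝ) else 0) - rho lam B)) * key

/-- The elementary increments from which `ff (k+2) - ff (k+1)` is built. -/
noncomputable def dd (lam : ℝ) (k j : ℕ) : ℝ :=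
  uu lam (k+1) * ((if j ≤ k+1 then ppi lam j else 0) - ppi lam j * FF lam (k+1))
  - uu lam k * ((if j ≤ k then ppi lam j else 0) - ppi lam j * FF lam k)

lemma hasSum_dd (h : 0 < lam) (B : Set ℕ) (k : ℕ) :
    HasSum (fun j => if j ∈ B then dd lam k j else 0)
      (ff lam B (k+2) - ff lam B (k+1)) := by
  have hS' : ∀ K : ℕ, HasSum
      (fun j => if j ∈ B then (if j ≤ K then ppi lam j else 0) else 0) (SS lam B K) := by
    intro K
    have hz : ∀ j ∉ Finset.range (K+1),
        (if j ∈ B then (if j ≤ K then ppi lam j else 0) else 0) = 0 := by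
      intro j hj
      simp only [Finset.mem_range, Nat.lt_succ_iff, not_le] at hj
      have hji : ¬ (j ≤ K) := by omega
      rw [if_neg hji]
      simp
    have hs := hasSum_sum_of_ne_finset_zero (L := SummationFilter.unconditional ℕ) hz
    have he : ∑ j ∈ Finset.range (K+1),
        (if j ∈ B then (if j ≤ K then ppi lam j else 0) else 0) = SS lam B K := by
      unfold SS
      refine Finset.sum_congr rfl fun j hj => ?_
      simp only [Finset.mem_range, Nat.lt_succ_iff] at hj
      rw [if_pos hj, Set.indicator_apply]
    rwa [he] at hs
  have R : HasSum (fun j => (if j ∈ B then ppi lam j else 0)) (rho lam B) := by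
    have := hasSum_indicator h B
    exact this
  have H := (((hS' (k+1)).sub (R.mul_right (FF lam (k+1)))).mul_left (uu lam (k+1))).sub
            (((hS' k).sub (R.mul_right (FF lam k))).mul_left (uu lam k))
  have hfun : (fun j => if j ∈ B then dd lam k j else 0)
      = fun j => uu lam (k+1) * ((if j ∈ B then (if j ≤ k+1 then ppi lam j else 0) else 0)
          - (if j ∈ B then ppi lam j else 0) * FF lam (k+1))
        - uu lam k * ((if j ∈ B then (if j ≤ k then ppi lam j else 0) else 0)
          - (if j ∈ B then ppi lam j else 0) * FF lam k) := by
    funext j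
    by_cases hj : j ∈ B
    · simp only [if_pos hj, dd]
    · simp [if_neg hj]
  have hval : ff lam B (k+2) - ff lam B (k+1)
      = uu lam (k+1) * (SS lam B (k+1) - rho lam B * FF lam (k+1))
        - uu lam k * (SS lam B k - rho lam B * FF lam k) := by
    simp [ff]
  rw [hfun, hval]
  exact H

lemma key_fin (h : 0 < lam) (k : ℕ) :
    lam * FF lam k ≤ ((k : ℝ)+1) * FF lam (k+1) := by
  have e1 : lam * FF lam k = ∑ i ∈ Finset.range (k+1), ((i : ℝ)+1) * ppi lam (i+1) := by
    unfold FF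
    rw [Finset.mul_sum]
    exact Finset.sum_congr rfl fun i _ => (ppi_succ h i).symm
  have e2 : ∑ i ∈ Finset.range (k+1), ((i : ℝ)+1) * ppi lam (i+1)
      ≤ ∑ i ∈ Finset.range (k+1), ((k : ℝ)+1) * ppi lam (i+1) := by
    refine Finset.sum_le_sum fun i hi => ?_
    have hik : (i : ℝ) + 1 ≤ (k : ℝ) + 1 := by
      have := Finset.mem_range.mp hi
      have : (i : ℝ) ≤ (k : ℝ) := by exact_mod_cast Nat.lt_succ_iff.mp this
      linarith
    exact mul_le_mul_of_nonneg_right hik (ppi_nonneg h _)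
  have e3 : ∑ i ∈ Finset.range (k+1), ppi lam (i+1) = FF lam (k+1) - ppi lam 0 := by
    have := Finset.sum_range_succ' (ppi lam) (k+1)
    unfold FF
    rw [this]
    ring
  have e4 : ∑ i ∈ Finset.range (k+1), ((k : ℝ)+1) * ppi lam (i+1)
      = ((k : ℝ)+1) * (FF lam (k+1) - ppi lam 0) := by
    rw [← Finset.mul_sum, e3]
  have e5 : ((k : ℝ)+1) * (FF lam (k+1) - ppi lam 0) ≤ ((k : ℝ)+1) * FF lam (k+1) := by
    have h0 : 0 ≤ ppi lam 0 := ppi_nonneg h 0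
    nlinarith
  linarith [e1, e2, e4.symm.le]

lemma key_tail (h : 0 < lam) (k : ℕ) :
    ((k : ℝ)+1) * (1 - FF lam (k+1)) ≤ lam * (1 - FF lam k) := by
  have h1 := (hasSum_tail h (k+1)).mul_left ((k : ℝ)+1)
  have h2 := (hasSum_tail h k).mul_left lam
  refine hasSum_le (fun i => ?_) h1 h2
  have e : i + (k+1) + 1 = i + (k+2) := by omega
  have hs := ppi_succ h (i + (k+1))
  rw [e] at hs
  have hb : ((k : ℝ)+1) ≤ ((i : ℝ) + (k+1) + 1) := by
    have : (0:ℝ) ≤ (i:ℝ) := Nat.cast_nonneg i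
    push_cast
    linarith
  have hnn := ppi_nonneg h (i + (k+2))
  calc ((k : ℝ)+1) * ppi lam (i+(k+2)) ≤ ((i : ℝ) + (k+1) + 1) * ppi lam (i+(k+2)) :=
        mul_le_mul_of_nonneg_right hb hnn
    _ = lam * ppi lam (i+(k+1)) := by
        rw [← hs]
        push_cast
        ring

lemma dd_nonpos (h : 0 < lam) {k j : ℕ} (hj : j ≠ k+1) : dd lam k j ≤ 0 := by
  rcases Nat.lt_or_ge j (k+1) with hlt | hge
  · -- j ≤ k
    have hjk : j ≤ k := by omega
    rw [dd, if_pos (by omega : j ≤ k+1), if_pos hjk]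
    have h5 : uu lam (k+1) * (1 - FF lam (k+1)) ≤ uu lam k * (1 - FF lam k) := by
      rw [uu_succ h, div_mul_eq_mul_div, div_le_iff₀ h]
      calc uu lam k * ((k : ℝ)+1) * (1 - FF lam (k+1))
          = uu lam k * (((k : ℝ)+1) * (1 - FF lam (k+1))) := by ring
        _ ≤ uu lam k * (lam * (1 - FF lam k)) :=
            mul_le_mul_of_nonneg_left (key_tail h k) (uu_nonneg h k)
        _ = uu lam k * (1 - FF lam k) * lam := by ring
    have h6 := mul_le_mul_of_nonneg_left h5 (ppi_nonneg h j)
    calc uu lam (k+1) * (ppi lam j - ppi lam j * FF lam (k+1))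
          - uu lam k * (ppi lam j - ppi lam j * FF lam k)
        = ppi lam j * (uu lam (k+1) * (1 - FF lam (k+1)))
          - ppi lam j * (uu lam k * (1 - FF lam k)) := by ring
      _ ≤ 0 := by linarith
  · -- j ≥ k+2
    have hj1 : ¬ (j ≤ k+1) := by omega
    have hj2 : ¬ (j ≤ k) := by omega
    rw [dd, if_neg hj1, if_neg hj2]
    have h5 : uu lam k * FF lam k ≤ uu lam (k+1) * FF lam (k+1) := by
      rw [uu_succ h, div_mul_eq_mul_div, le_div_iff₀ h]
      calc uu lam k * FF lam k * lam = uu lam k * (lam * FF lam k) := by ring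
        _ ≤ uu lam k * (((k : ℝ)+1) * FF lam (k+1)) :=
            mul_le_mul_of_nonneg_left (key_fin h k) (uu_nonneg h k)
        _ = uu lam k * ((k : ℝ)+1) * FF lam (k+1) := by ring
    have h6 := mul_le_mul_of_nonneg_left h5 (ppi_nonneg h j)
    calc uu lam (k+1) * (0 - ppi lam j * FF lam (k+1))
          - uu lam k * (0 - ppi lam j * FF lam k)
        = ppi lam j * (uu lam k * FF lam k)
          - ppi lam j * (uu lam (k+1) * FF lam (k+1)) := by ring
      _ ≤ 0 := by linarith

lemma dd_diag_le (h : 0 < lam) (k : ℕ) : dd lam k (k+1) ≤ 1/lam := by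
  have e1 := uu_succ_mul_ppi_succ h k
  have e2 := uu_mul_ppi_succ h k
  have hde : dd lam k (k+1)
      = (1/lam) * (1 - FF lam (k+1)) + (1/((k : ℝ)+1)) * FF lam k := by
    rw [dd, if_pos le_rfl, if_neg (by omega)]
    linear_combination (1 - FF lam (k+1)) * e1 + (FF lam k) * e2
  rw [hde]
  have hk1 : (0:ℝ) < (k : ℝ)+1 := by positivity
  have hkey := key_fin h k
  have h7 : (1/((k : ℝ)+1)) * FF lam k ≤ (1/lam) * FF lam (k+1) := by
    rw [div_mul_eq_mul_div, div_mul_eq_mul_div, one_mul, one_mul, div_le_div_iff₀ hk1 h]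
    linarith
  have : (1/lam) * (1 - FF lam (k+1)) + (1/lam) * FF lam (k+1) = 1/lam := by ring
  linarith

lemma rho_add_compl (h : 0 < lam) (B : Set ℕ) : rho lam B + rho lam Bᶜ = 1 := by
  have hadd := (hasSum_indicator h B).add (hasSum_indicator h Bᶜ)
  have hfn : (fun j => B.indicator (ppi lam) j + Bᶜ.indicator (ppi lam) j) = ppi lam := by
    funext j
    exact congrFun (Set.indicator_self_add_compl B (ppi lam)) j
  rw [hfn] at hadd
  exact hadd.unique (hasSum_ppi h)

lemma ff_add_compl (h : 0 < lam) (B : Set ℕ) (k : ℕ) :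
    ff lam B k + ff lam Bᶜ k = 0 := by
  cases k with
  | zero => simp [ff]
  | succ k =>
    have hS : SS lam B k + SS lam Bᶜ k = FF lam k := by
      unfold SS FF
      rw [← Finset.sum_add_distrib]
      refine Finset.sum_congr rfl fun i _ => ?_
      exact congrFun (Set.indicator_self_add_compl B (ppi lam)) i
    have hr := rho_add_compl h B
    simp only [ff]
    linear_combination uu lam k * hS - uu lam k * FF lam k * hr

lemma diff_ff_le (h : 0 < lam) (B : Set ℕ) (k : ℕ) :
    ff lam B (k+2) - ff lam B (k+1) ≤ 1/lam := by
  have hB := hasSum_dd h B k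
  have hg : HasSum (fun j => if j = k+1 then max (dd lam k (k+1)) 0 else 0)
      (max (dd lam k (k+1)) 0) := hasSum_ite_eq (k+1) _
  have hle := hasSum_le (fun j => ?_) hB hg
  · have : max (dd lam k (k+1)) 0 ≤ 1/lam :=
      max_le (dd_diag_le h k) (by positivity)
    linarith
  · by_cases hjk : j = k+1
    · subst hjk
      rw [if_pos rfl]
      by_cases hjB : k+1 ∈ B
      · rw [if_pos hjB]; exact le_max_left _ _
      · rw [if_neg hjB]; exact le_max_right _ _
    · rw [if_neg hjk]
      by_cases hjB : j ∈ B
      · rw [if_pos hjB]; exact dd_nonpos h hjk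
      · rw [if_neg hjB]

lemma abs_diff_ff_le (h : 0 < lam) (B : Set ℕ) (k : ℕ) :
    |ff lam B (k+2) - ff lam B (k+1)| ≤ 1/lam := by
  rw [abs_le]
  constructor
  · have h1 := ff_add_compl h B (k+2)
    have h2 := ff_add_compl h B (k+1)
    have := diff_ff_le h Bᶜ k
    linarith
  · exact diff_ff_le h B k


section Prob

variable {Ω : Type*} [MeasurableSpace Ω]

lemma integrable_comp_nat (μ : Measure Ω) [IsProbabilityMeasure μ]
    (g : ℕ → ℝ) {N : Ω → ℕ} (hN : Measurable N) (n : ℕ) (hb : ∀ ω, N ω ≤ n) :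
    Integrable (fun ω => g (N ω)) μ := by
  have hgm : Measurable g := measurable_from_top
  have hmeas : Measurable fun ω => g (N ω) := hgm.comp hN
  refine ⟨hmeas.aestronglyMeasurable, ?_⟩
  refine HasFiniteIntegral.of_bounded (C := ∑ j ∈ Finset.range (n+1), |g j|)
    (ae_of_all _ fun ω => ?_)
  rw [Real.norm_eq_abs]
  exact Finset.single_le_sum (f := fun j => |g j|) (fun j _ => abs_nonneg _)
    (Finset.mem_range.mpr (Nat.lt_succ_of_le (hb ω)))

/-- Stein--Chen bound: a sum of independent Bernoulli variables with total mean `lam`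
is within `(∑ pᵢ²)/lam` of the Poisson distribution, in total variation. -/
lemma stein_half (μ : Measure Ω) [IsProbabilityMeasure μ]
    (n : ℕ) (X : Fin n → Ω → ℝ)
    (hXmeas : ∀ i, Measurable (X i))
    (hXBer : ∀ i ω, X i ω = 0 ∨ X i ω = 1)
    (hXindep : iIndepFun X μ)
    (p : Fin n → ℝ) (hp : ∀ i, p i = ∫ ω, X i ω ∂μ)
    (lam : ℝ) (hlam : 0 < lam) (hsum : (∑ i, p i) = lam)
    (A : Set ℝ) (hA : MeasurableSet A) :
    |(μ.map (fun ω => ∑ i, X i ω) A).toReal - rho lam (((↑·) : ℕ → ℝ) ⁻¹' A)|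
      ≤ (∑ i, (p i)^2) / lam := by
  classical
  set B : Set ℕ := ((↑·) : ℕ → ℝ) ⁻¹' A with hB
  -- ℕ-valued versions of the Bernoulli variables
  set N : Fin n → Ω → ℕ := fun i ω => if X i ω = 1 then 1 else 0 with hN
  have hNmeas : ∀ i, Measurable (N i) := fun i =>
    Measurable.ite (hXmeas i (measurableSet_singleton 1)) measurable_const measurable_const
  have hcast : ∀ i ω, ((N i ω : ℝ)) = X i ω := by
    intro i ω
    rcases hXBer i ω with h0 | h1
    · simp [hN, h0]
    · simp [hN, h1]
  set NS : Ω → ℕ := fun ω => ∑ i, N i ω with hNS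
  have hNSmeas : Measurable NS := Finset.measurable_sum _ fun i _ => hNmeas i
  have hNle : ∀ i ω, N i ω ≤ 1 := by
    intro i ω
    by_cases h1 : X i ω = 1 <;> simp [hN, h1]
  have hNSle : ∀ ω, NS ω ≤ n := by
    intro ω
    calc NS ω ≤ ∑ _i : Fin n, 1 := Finset.sum_le_sum fun i _ => hNle i ω
      _ = n := by simp
  have hWNS : ∀ ω, (∑ i, X i ω) = ((NS ω : ℝ)) := by
    intro ω
    push_cast [hNS]
    exact Finset.sum_congr rfl fun i _ => (hcast i ω).symm
  -- the sum is measurable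
  have hWmeas : Measurable fun ω => ∑ i, X i ω :=
    Finset.measurable_sum _ fun i _ => hXmeas i
  -- rewrite the mapped measure
  have hmap : (μ.map (fun ω => ∑ i, X i ω) A).toReal = (μ (NS ⁻¹' B)).toReal := by
    rw [Measure.map_apply hWmeas hA]
    have hpre : (fun ω => ∑ i, X i ω) ⁻¹' A = NS ⁻¹' B := by
      ext ω
      simp [Set.mem_preimage, hWNS ω, hB]
    rw [hpre]
  -- auxiliary sums with one variable removed
  set T : Fin n → Ω → ℝ := fun i ω => ∑ j ∈ Finset.univ.erase i, X j ω with hT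
  set S : Fin n → Ω → ℕ := fun i ω => ∑ j ∈ Finset.univ.erase i, N j ω with hS
  have hSmeas : ∀ i, Measurable (S i) := fun i =>
    Finset.measurable_sum _ fun j _ => hNmeas j
  have hTS : ∀ i ω, T i ω = ((S i ω : ℝ)) := by
    intro i ω
    push_cast [hT, hS]
    exact Finset.sum_congr rfl fun j _ => (hcast j ω).symm
  have hSle : ∀ i ω, S i ω ≤ n := by
    intro i ω
    calc S i ω ≤ ∑ _j ∈ Finset.univ.erase i, 1 :=
          Finset.sum_le_sum fun j _ => hNle j ω
      _ = (Finset.univ.erase i).card := by simp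
      _ ≤ (Finset.univ : Finset (Fin n)).card := Finset.card_le_card (Finset.erase_subset _ _)
      _ = n := by simp
  have hNS_split : ∀ i ω, NS ω = S i ω + N i ω := by
    intro i ω
    rw [hNS, hS]
    exact (Finset.sum_erase_add Finset.univ _ (Finset.mem_univ i)).symm
  -- independence of `X i` from functions of the rest
  have hindep : ∀ (i : Fin n) (G : ℝ → ℝ), Measurable G →
      IndepFun (X i) (fun ω => G (T i ω)) μ := by
    intro i G hG
    have hdisj : Disjoint ({i} : Finset (Fin n)) (Finset.univ.erase i) := by
      simp [Finset.disjoint_left]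
    have h0 := hXindep.indepFun_finset {i} (Finset.univ.erase i) hdisj hXmeas
    have hφ : Measurable fun (v : ({i} : Finset (Fin n)) → ℝ) =>
        v ⟨i, Finset.mem_singleton_self i⟩ := measurable_pi_apply _
    have hψ : Measurable fun (v : ((Finset.univ.erase i : Finset (Fin n)) : Type) → ℝ) =>
        G (∑ j, v j) :=
      hG.comp (Finset.measurable_sum Finset.univ fun j _ => measurable_pi_apply j)
    have h1 := h0.comp hφ hψ
    have hfe : (fun ω => G (T i ω))
        = fun a => G (∑ j : (Finset.univ.erase i : Finset (Fin n)), X j a) := by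
      funext ω
      rw [hT]
      congr 1
      exact (Finset.sum_coe_sort _ (fun j => X j ω)).symm
    rw [hfe]
    exact h1
  -- basic integrability facts
  have hXint : ∀ i, Integrable (X i) μ := by
    intro i
    refine ⟨(hXmeas i).aestronglyMeasurable, ?_⟩
    refine HasFiniteIntegral.of_bounded (C := 1) (ae_of_all _ fun ω => ?_)
    rcases hXBer i ω with h | h <;> simp [h]
  have hGint : ∀ (g : ℕ → ℝ) (i : Fin n), Integrable (fun ω => g (S i ω)) μ :=
    fun g i => integrable_comp_nat μ g (hSmeas i) n (hSle i)
  have hNSint : ∀ g : ℕ → ℝ, Integrable (fun ω => g (NS ω)) μ :=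
    fun g => integrable_comp_nat μ g hNSmeas n hNSle
  have hXbd : ∀ i, ∃ C, ∀ ω, ‖X i ω‖ ≤ C := by
    intro i
    exact ⟨1, fun ω => by rcases hXBer i ω with h | h <;> simp [h]⟩
  have hXGint : ∀ (i : Fin n) (g : ℕ → ℝ),
      Integrable (fun ω => X i ω * g (S i ω)) μ := by
    intro i g
    exact (hGint g i).bdd_mul (hXmeas i).aestronglyMeasurable (ae_of_all _ (hXbd i).choose_spec)
  have hXNSint : ∀ (i : Fin n) (g : ℕ → ℝ),
      Integrable (fun ω => X i ω * g (NS ω)) μ := by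
    intro i g
    exact (hNSint g).bdd_mul (hXmeas i).aestronglyMeasurable (ae_of_all _ (hXbd i).choose_spec)
  -- independence-based product formula
  have hmul : ∀ (i : Fin n) (g : ℕ → ℝ),
      ∫ ω, X i ω * g (S i ω) ∂μ = p i * ∫ ω, g (S i ω) ∂μ := by
    intro i g
    have hGm : Measurable fun r : ℝ => g (⌊r⌋₊) :=
      (measurable_from_top (f := g)).comp Nat.measurable_floor
    have hid := hindep i _ hGm
    have hpt : ∀ ω, g (S i ω) = (fun r : ℝ => g ⌊r⌋₊) (T i ω) := by
      intro ω
      rw [hTS i ω]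
      simp
    have h1 : ∫ ω, X i ω * g (S i ω) ∂μ
        = ∫ ω, X i ω * (fun r : ℝ => g ⌊r⌋₊) (T i ω) ∂μ := by
      refine integral_congr_ae (ae_of_all _ fun ω => ?_)
      simp only [hpt ω]
    have hint2 : Integrable (fun ω => (fun r : ℝ => g ⌊r⌋₊) (T i ω)) μ := by
      refine (hGint g i).congr (ae_of_all _ fun ω => ?_)
      simp only [hpt ω]
    have h2 := hid.integral_fun_mul_eq_mul_integral (hXint i).aestronglyMeasurable hint2.aestronglyMeasurable
    have h3 : ∫ ω, (fun r : ℝ => g ⌊r⌋₊) (T i ω) ∂μ = ∫ ω, g (S i ω) ∂μ := by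
      refine integral_congr_ae (ae_of_all _ fun ω => ?_)
      simp only [hpt ω]
    rw [h1]
    calc ∫ ω, X i ω * (fun r : ℝ => g ⌊r⌋₊) (T i ω) ∂μ
        = (∫ ω, X i ω ∂μ) * ∫ ω, (fun r : ℝ => g ⌊r⌋₊) (T i ω) ∂μ := h2
      _ = p i * ∫ ω, g (S i ω) ∂μ := by rw [← hp i, h3]
  -- nonnegativity of the means
  have hpnonneg : ∀ i, 0 ≤ p i := by
    intro i
    rw [hp i]
    refine integral_nonneg fun ω => ?_
    rcases hXBer i ω with h | h <;> simp [h]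
  -- the probability as an expectation
  have hBmeas : MeasurableSet B := MeasurableSet.of_discrete
  have hmem : (μ (NS ⁻¹' B)).toReal = ∫ ω, (if NS ω ∈ B then (1:ℝ) else 0) ∂μ := by
    rw [← measureReal_def, ← integral_indicator_one (hNSmeas hBmeas)]
    refine integral_congr_ae (ae_of_all _ fun ω => ?_)
    simp [Set.indicator_apply, Set.mem_preimage]
  -- Stein identity
  have hinds : Integrable (fun ω => (if NS ω ∈ B then (1:ℝ) else 0)) μ :=
    hNSint (fun k => if k ∈ B then (1:ℝ) else 0)
  have hstep1 : (∫ ω, (if NS ω ∈ B then (1:ℝ) else 0) ∂μ) - rho lam B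
      = ∫ ω, (lam * ff lam B (NS ω + 1) - (NS ω : ℝ) * ff lam B (NS ω)) ∂μ := by
    have e1 : (∫ ω, (if NS ω ∈ B then (1:ℝ) else 0) ∂μ) - rho lam B
        = ∫ ω, ((if NS ω ∈ B then (1:ℝ) else 0) - rho lam B) ∂μ := by
      rw [integral_sub hinds (integrable_const _), integral_const]
      simp
    rw [e1]
    refine integral_congr_ae (ae_of_all _ fun ω => ?_)
    exact (stein_eq hlam B (NS ω)).symm
  have hf1int : Integrable (fun ω => ff lam B (NS ω + 1)) μ :=
    hNSint (fun k => ff lam B (k + 1))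
  have hf0int : Integrable (fun ω => (NS ω : ℝ) * ff lam B (NS ω)) μ :=
    hNSint (fun k => (k : ℝ) * ff lam B k)
  have hstep2 : ∫ ω, (lam * ff lam B (NS ω + 1) - (NS ω : ℝ) * ff lam B (NS ω)) ∂μ
      = lam * (∫ ω, ff lam B (NS ω + 1) ∂μ) - ∫ ω, (NS ω : ℝ) * ff lam B (NS ω) ∂μ := by
    rw [integral_sub (hf1int.const_mul lam) hf0int, integral_const_mul]
  -- decompose `NS * f NS` as a sum
  have hXfNSint : ∀ i : Fin n, Integrable (fun ω => X i ω * ff lam B (NS ω)) μ :=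
    fun i => hXNSint i (ff lam B)
  have hstep3 : ∫ ω, (NS ω : ℝ) * ff lam B (NS ω) ∂μ
      = ∑ i, ∫ ω, X i ω * ff lam B (NS ω) ∂μ := by
    rw [← integral_finset_sum Finset.univ (fun i _ => hXfNSint i)]
    refine integral_congr_ae (ae_of_all _ fun ω => ?_)
    show (NS ω : ℝ) * ff lam B (NS ω) = ∑ i : Fin n, X i ω * ff lam B (NS ω)
    rw [← hWNS ω, Finset.sum_mul]
  -- replace `NS` by `S i + 1` inside products with `X i`
  have hstep4 : ∀ i : Fin n, ∫ ω, X i ω * ff lam B (NS ω) ∂μ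
      = p i * ∫ ω, ff lam B (S i ω + 1) ∂μ := by
    intro i
    have hpt : ∀ ω, X i ω * ff lam B (NS ω) = X i ω * ff lam B (S i ω + 1) := by
      intro ω
      rcases hXBer i ω with h0 | h1
      · rw [h0]; ring
      · have hNi : N i ω = 1 := by simp [hN, h1]
        rw [hNS_split i ω, hNi]
    have h1 : ∫ ω, X i ω * ff lam B (NS ω) ∂μ
        = ∫ ω, X i ω * (fun k => ff lam B (k+1)) (S i ω) ∂μ := by
      refine integral_congr_ae (ae_of_all _ fun ω => ?_)
      exact hpt ω
    rw [h1, hmul i (fun k => ff lam B (k+1))]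
  set g2 : ℕ → ℝ := fun k => ff lam B (k+2) - ff lam B (k+1) with hg2
  have hstep6 : ∀ i : Fin n, (∫ ω, ff lam B (NS ω + 1) ∂μ) - (∫ ω, ff lam B (S i ω + 1) ∂μ)
      = p i * ∫ ω, g2 (S i ω) ∂μ := by
    intro i
    have hint2 : Integrable (fun ω => ff lam B (S i ω + 1)) μ :=
      hGint (fun k => ff lam B (k+1)) i
    rw [← integral_sub hf1int hint2]
    have h1 : ∫ ω, (ff lam B (NS ω + 1) - ff lam B (S i ω + 1)) ∂μ
        = ∫ ω, X i ω * g2 (S i ω) ∂μ := by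
      refine integral_congr_ae (ae_of_all _ fun ω => ?_)
      show ff lam B (NS ω + 1) - ff lam B (S i ω + 1) = X i ω * g2 (S i ω)
      rcases hXBer i ω with h0 | h1
      · have hNi : N i ω = 0 := by
          simp only [hN]
          rw [if_neg]
          rw [h0]
          norm_num
        rw [hNS_split i ω, hNi, h0, add_zero]
        ring
      · have hNi : N i ω = 1 := by simp [hN, h1]
        rw [hNS_split i ω, hNi, h1, hg2, one_mul]
    rw [h1, hmul i g2]
  have hg2bound : ∀ i : Fin n, |∫ ω, g2 (S i ω) ∂μ| ≤ 1/lam := by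
    intro i
    have hb : ∀ᵐ ω ∂μ, ‖g2 (S i ω)‖ ≤ 1/lam := by
      refine ae_of_all _ fun ω => ?_
      rw [Real.norm_eq_abs, hg2]
      exact abs_diff_ff_le hlam B (S i ω)
    have := norm_integral_le_of_norm_le_const (μ := μ) (f := fun ω => g2 (S i ω)) hb
    simpa using this
  have hfinal : (∫ ω, (if NS ω ∈ B then (1:ℝ) else 0) ∂μ) - rho lam B
      = ∑ i, p i * (p i * ∫ ω, g2 (S i ω) ∂μ) := by
    rw [hstep1, hstep2, hstep3]
    have e1 : lam * ∫ ω, ff lam B (NS ω + 1) ∂μ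
        = ∑ i, p i * ∫ ω, ff lam B (NS ω + 1) ∂μ := by
      rw [← Finset.sum_mul, hsum]
    rw [e1, ← Finset.sum_sub_distrib]
    refine Finset.sum_congr rfl fun i _ => ?_
    rw [hstep4 i, ← mul_sub, hstep6 i]
  rw [hmap, hmem, hfinal]
  calc |∑ i, p i * (p i * ∫ ω, g2 (S i ω) ∂μ)|
      ≤ ∑ i, |p i * (p i * ∫ ω, g2 (S i ω) ∂μ)| := Finset.abs_sum_le_sum_abs _ _
    _ ≤ ∑ i, (p i)^2 * (1/lam) := by
        refine Finset.sum_le_sum fun i _ => ?_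
        rw [abs_mul, abs_mul, abs_of_nonneg (hpnonneg i)]
        nlinarith [hg2bound i, hpnonneg i, abs_nonneg (∫ ω, g2 (S i ω) ∂μ),
          sq_nonneg (p i)]
    _ = (∑ i, (p i)^2) / lam := by
        rw [← Finset.sum_mul]
        ring

end Prob

end SteinChenPBD

/-- Total variation distance between two distributions on `ℝ`:
`sup_{A measurable} |ν₁(A) - ν₂(A)|`. -/
noncomputable def dTV (ν₁ ν₂ : Measure ℝ) : ℝ :=
  ⨆ A : {s : Set ℝ // MeasurableSet s}, |(ν₁ A).toReal - (ν₂ A).toReal|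

/-- Two sums of independent Bernoulli random variables whose mean parameters have
the same total `μ > 0` satisfy `d_TV(∑ Xᵢ, ∑ Y_j) ≤ (∑ pᵢ² + ∑ q_j²)/μ`. -/
theorem dTV_PBD_same_mean
    {Ω₁ Ω₂ : Type*} [MeasurableSpace Ω₁] [MeasurableSpace Ω₂]
    (μ₁ : Measure Ω₁) (μ₂ : Measure Ω₂)
    [IsProbabilityMeasure μ₁] [IsProbabilityMeasure μ₂]
    (n m : ℕ) (X : Fin n → Ω₁ → ℝ) (Y : Fin m → Ω₂ → ℝ)
    (hXmeas : ∀ i, Measurable (X i)) (hYmeas : ∀ j, Measurable (Y j))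
    (hXBer : ∀ i ω, X i ω = 0 ∨ X i ω = 1)
    (hYBer : ∀ j ω, Y j ω = 0 ∨ Y j ω = 1)
    (hXindep : iIndepFun X μ₁)
    (hYindep : iIndepFun Y μ₂)
    (p : Fin n → ℝ) (q : Fin m → ℝ)
    (hp : ∀ i, p i = ∫ ω, X i ω ∂μ₁) (hq : ∀ j, q j = ∫ ω, Y j ω ∂μ₂)
    (mean : ℝ) (hmean_pos : 0 < mean)
    (hpsum : (∑ i, p i) = mean) (hqsum : (∑ j, q j) = mean) :
    dTV (μ₁.map (fun ω => ∑ i, X i ω)) (μ₂.map (fun ω => ∑ j, Y j ω))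
      ≤ ((∑ i, (p i) ^ 2) + ∑ j, (q j) ^ 2) / mean := by
  have hne : Nonempty {s : Set ℝ // MeasurableSet s} := ⟨⟨∅, MeasurableSet.empty⟩⟩
  refine ciSup_le fun A => ?_
  have h1 := SteinChenPBD.stein_half μ₁ n X hXmeas hXBer hXindep p hp mean hmean_pos hpsum
    A.1 A.2
  have h2 := SteinChenPBD.stein_half μ₂ m Y hYmeas hYBer hYindep q hq mean hmean_pos hqsum
    A.1 A.2
  set a := ((μ₁.map (fun ω => ∑ i, X i ω)) A.1).toReal
  set b := ((μ₂.map (fun ω => ∑ j, Y j ω)) A.1).toReal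
  set c := SteinChenPBD.rho mean (((↑·) : ℕ → ℝ) ⁻¹' A.1)
  have htri : |a - b| ≤ |a - c| + |b - c| := by
    have := abs_sub_le a c b
    rw [abs_sub_comm c b] at this
    exact this
  have : |a - b| ≤ (∑ i, (p i)^2) / mean + (∑ j, (q j)^2) / mean := by
    calc |a - b| ≤ |a - c| + |b - c| := htri
      _ ≤ (∑ i, (p i)^2) / mean + (∑ j, (q j)^2) / mean := add_le_add h1 h2
  calc |a - b| ≤ (∑ i, (p i)^2) / mean + (∑ j, (q j)^2) / mean := this
    _ = ((∑ i, (p i) ^ 2) + ∑ j, (q j) ^ 2) / mean := by ring
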